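/- arXiv:2306.04084 — 4 statements merged into one kernel-verified Lean document; each statement's English description precedes it below -/
import Mathlib

section
/- Let p ≥ 1 and let k_i, k_j > 0 be real numbers. Let A and B be symmetric real p×p matrices with A ≻ O and −k_j·B ≺ k_i·A. Define Y* := (k_i k_j/(k_i+k_j)) · A^{1/2} (I − A^{−1/2} B A^{−1/2})₊ A^{1/2}. Then Y* is feasible for the problem max over Y ⪰ O with −k_j·B ≺ Y ≺ k_i·A of k_i·log det(A − Y/k_i) + k_j·log det(B + Y/k_j), i.e. Y* ⪰ O and −k_j·B ≺ Y* ≺ k_i·A, and for every symmetric Y with Y ⪰ O and −k_j·B ≺ Y ≺ k_i·A one has k_i·log det(A − Y/k_i) + k_j·log det(B + Y/k_j) ≤ k_i·log det(A − Y*/k_i) + k_j·log det(B + Y*/k_j). -/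
open Matrix

open scoped MatrixOrder

section StmtZeroHelpers
variable {p : ℕ}

variable {p : ℕ}

lemma trace_sq_nonneg (X : Matrix (Fin p) (Fin p) ℝ) : 0 ≤ (Xᴴ * X).trace := by
  simp only [Matrix.trace, Matrix.diag, Matrix.mul_apply, Matrix.conjTranspose_apply,
    star_trivial]
  exact Finset.sum_nonneg fun i _ => Finset.sum_nonneg fun j _ => mul_self_nonneg _

lemma trace_mul_psd_nonneg {X Y : Matrix (Fin p) (Fin p) ℝ} (hX : X.PosSemidef)
    (hY : Y.PosSemidef) : 0 ≤ (X * Y).trace := by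
  obtain ⟨C, rfl⟩ := CStarAlgebra.nonneg_iff_eq_star_mul_self.mp hX.nonneg
  obtain ⟨D, rfl⟩ := CStarAlgebra.nonneg_iff_eq_star_mul_self.mp hY.nonneg
  rw [Matrix.star_eq_conjTranspose, Matrix.star_eq_conjTranspose]
  have h : Cᴴ * C * (Dᴴ * D) = Cᴴ * (C * Dᴴ * D) := by
    simp only [Matrix.mul_assoc]
  rw [h, Matrix.trace_mul_comm]
  have h2 : C * Dᴴ * D * Cᴴ = (D * Cᴴ)ᴴ * (D * Cᴴ) := by
    rw [Matrix.conjTranspose_mul, Matrix.conjTranspose_conjTranspose, Matrix.mul_assoc]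
  rw [h2]
  exact trace_sq_nonneg _

lemma posDef_conj {X : Matrix (Fin p) (Fin p) ℝ} (hX : X.PosDef)
    (N : Matrix (Fin p) (Fin p) ℝ) (hN : IsUnit N) : (N * X * Nᴴ).PosDef := by
  refine posDef_iff_dotProduct_mulVec.mpr ⟨by simpa using isHermitian_conjTranspose_mul_mul Nᴴ hX.1, fun x hx => ?_⟩
  have hinj : Function.Injective (Nᴴ.mulVec) :=
    mulVec_injective_iff_isUnit.mpr ((Matrix.isUnit_conjTranspose N).mpr hN)
  have hx' : Nᴴ *ᵥ x ≠ 0 := fun h => hx (hinj (by simpa using h))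
  have := hX.dotProduct_mulVec_pos hx'
  simpa only [star_mulVec, dotProduct_mulVec, vecMul_vecMul, conjTranspose_conjTranspose,
    Matrix.mul_assoc] using this

lemma posDef_smul {X : Matrix (Fin p) (Fin p) ℝ} (hX : X.PosDef) {c : ℝ} (hc : 0 < c) :
    (c • X).PosDef := by
  refine posDef_iff_dotProduct_mulVec.mpr ⟨by rw [Matrix.IsHermitian, Matrix.conjTranspose_smul, hX.1.eq]; norm_num, fun x hx => ?_⟩
  have := hX.dotProduct_mulVec_pos hx
  simp only [smul_mulVec, dotProduct_smul, smul_eq_mul]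
  positivity

lemma posDef_of_psd_isUnit {X : Matrix (Fin p) (Fin p) ℝ} (hX : X.PosSemidef)
    (hU : IsUnit X) : X.PosDef := by
  refine posDef_iff_dotProduct_mulVec.mpr ⟨hX.1, fun x hx => lt_of_le_of_ne (hX.dotProduct_mulVec_nonneg x) fun heq => hx ?_⟩
  have h0 : X *ᵥ x = 0 := (hX.dotProduct_mulVec_zero_iff x).mp heq.symm
  have hinj : Function.Injective (X.mulVec) := mulVec_injective_iff_isUnit.mpr hU
  exact hinj (by simpa using h0)

lemma log_det_le_trace {W : Matrix (Fin p) (Fin p) ℝ} (hW : W.PosDef) :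
    Real.log W.det ≤ W.trace - p := by
  have hdet : W.det = ∏ i, hW.1.eigenvalues i := by simpa using hW.1.det_eq_prod_eigenvalues
  have htr : W.trace = ∑ i, hW.1.eigenvalues i := by
    conv_lhs => rw [hW.1.spectral_theorem, Unitary.conjStarAlgAut_apply]
    rw [Matrix.trace_mul_cycle]
    simp [Matrix.mul_assoc, mem_unitaryGroup_iff'.mp hW.1.eigenvectorUnitary.2,
      Matrix.trace_diagonal]
  rw [hdet, htr, Real.log_prod (fun i _ => (hW.eigenvalues_pos i).ne')]
  calc ∑ i, Real.log (hW.1.eigenvalues i) ≤ ∑ i, (hW.1.eigenvalues i - 1) :=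
        Finset.sum_le_sum fun i _ => Real.log_le_sub_one_of_pos (hW.eigenvalues_pos i)
    _ = ∑ i, hW.1.eigenvalues i - p := by
        rw [Finset.sum_sub_distrib]; simp

lemma log_det_le {X Y : Matrix (Fin p) (Fin p) ℝ} (hX : X.PosDef) (hY : Y.PosDef) :
    Real.log Y.det ≤ Real.log X.det + ((X⁻¹ * Y).trace - ↑p) := by
  set S := CFC.sqrt X with hSdef
  have hSpsd : S.PosSemidef := Matrix.nonneg_iff_posSemidef.mp (CFC.sqrt_nonneg X)
  have hSS : S * S = X := CFC.sqrt_mul_sqrt_self X hX.posSemidef.nonneg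
  have hdetS : S.det * S.det = X.det := by rw [← Matrix.det_mul, hSS]
  have hdetSne : S.det ≠ 0 := by
    intro h; rw [h, mul_zero] at hdetS; exact hX.det_pos.ne' hdetS.symm
  have hSunit : IsUnit S := (Matrix.isUnit_iff_isUnit_det S).mpr hdetSne.isUnit
  have hSpd : S.PosDef := posDef_of_psd_isUnit hSpsd hSunit
  have hSiunit : IsUnit S⁻¹ := hSpd.inv.isUnit
  have hSinvH : (S⁻¹)ᴴ = S⁻¹ := hSpd.inv.1
  set W := S⁻¹ * Y * S⁻¹ with hW
  have hWpd : W.PosDef := by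
    have := posDef_conj hY (S⁻¹) hSiunit
    rwa [hSinvH] at this
  have hSiS : S⁻¹ * S = 1 := Matrix.nonsing_inv_mul _ hdetSne.isUnit
  have hSSi : S * S⁻¹ = 1 := Matrix.mul_nonsing_inv _ hdetSne.isUnit
  have hYW : Y = S * W * S := by
    rw [hW]
    calc Y = (S * S⁻¹) * Y * (S⁻¹ * S) := by rw [hSSi, hSiS, Matrix.one_mul, Matrix.mul_one]
    _ = S * (S⁻¹ * Y * S⁻¹) * S := by simp only [Matrix.mul_assoc]
  have hdetY : Y.det = X.det * W.det := by
    rw [hYW, Matrix.det_mul, Matrix.det_mul, ← hdetS]; ring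
  have hXinv : X⁻¹ = S⁻¹ * S⁻¹ := by rw [← hSS, Matrix.mul_inv_rev]
  have htr : (X⁻¹ * Y).trace = W.trace := by
    rw [hXinv, hW, Matrix.trace_mul_cycle S⁻¹ Y S⁻¹, Matrix.mul_assoc]
  rw [hdetY, Real.log_mul hX.det_pos.ne' hWpd.det_pos.ne', htr]
  have := log_det_le_trace hWpd
  linarith

lemma combine_final {a1 a2 b1 b2 T1 T2 ki kj P : ℝ} (hki : 0 < ki) (hkj : 0 < kj)
    (l1 : a1 ≤ b1 + (T1 - P)) (l2 : a2 ≤ b2 + (T2 - P))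
    (hcomb : ki * T1 + kj * T2 ≤ ki * P + kj * P) :
    ki * a1 + kj * a2 ≤ ki * b1 + kj * b2 := by
  nlinarith [mul_le_mul_of_nonneg_left l1 hki.le, mul_le_mul_of_nonneg_left l2 hkj.le]

end StmtZeroHelpers

/-- The positive part `X₊` of a symmetric (Hermitian) real matrix `X`: with spectral
decomposition `X = U diag(λ₁,…,λ_p) Uᵀ`, it is `U diag(max(λ₁,0),…,max(λ_p,0)) Uᵀ`
(junk value `0` if `X` is not Hermitian). -/
noncomputable def matPosPart {p : ℕ} (X : Matrix (Fin p) (Fin p) ℝ) :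
    Matrix (Fin p) (Fin p) ℝ :=
  if hX : X.IsHermitian then
    (hX.eigenvectorUnitary : Matrix (Fin p) (Fin p) ℝ) *
      Matrix.diagonal (fun i => max (hX.eigenvalues i) 0) *
      (star hX.eigenvectorUnitary : Matrix (Fin p) (Fin p) ℝ)
  else 0

open scoped MatrixOrder

/-- `Y* := (kᵢkⱼ/(kᵢ+kⱼ)) A^{1/2} (I − A^{−1/2} B A^{−1/2})₊ A^{1/2}` is
feasible for the subproblem `max kᵢ log det(A − Y/kᵢ) + kⱼ log det(B + Y/kⱼ)` subject to
`Y ⪰ O`, `−kⱼB ≺ Y ≺ kᵢA`, and it is optimal. -/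
theorem stmt0 {p : ℕ} (hp : 1 ≤ p) (ki kj : ℝ) (hki : 0 < ki) (hkj : 0 < kj)
    (A B : Matrix (Fin p) (Fin p) ℝ) (hAs : A.IsSymm) (hBs : B.IsSymm)
    (hA : A.PosDef) (hfeas : (ki • A + kj • B).PosDef)
    (sqrtA : Matrix (Fin p) (Fin p) ℝ) (hsqrtA : sqrtA = CFC.sqrt A)
    (Ystar : Matrix (Fin p) (Fin p) ℝ)
    (hYstar : Ystar = (ki * kj / (ki + kj)) •
      (sqrtA * matPosPart (1 - sqrtA⁻¹ * B * sqrtA⁻¹) * sqrtA)) :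
    Ystar.PosSemidef ∧ (Ystar + kj • B).PosDef ∧ (ki • A - Ystar).PosDef ∧
    ∀ Y : Matrix (Fin p) (Fin p) ℝ, Y.IsSymm → Y.PosSemidef →
      (Y + kj • B).PosDef → (ki • A - Y).PosDef →
      ki * Real.log (A - ki⁻¹ • Y).det + kj * Real.log (B + kj⁻¹ • Y).det ≤
        ki * Real.log (A - ki⁻¹ • Ystar).det + kj * Real.log (B + kj⁻¹ • Ystar).det := by
  have hBH : Bᴴ = B := by
    rw [Matrix.conjTranspose_eq_transpose_of_trivial]; exact hBs
  subst hsqrtA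
  set S := CFC.sqrt A with hSdef
  have hSpsd : S.PosSemidef := Matrix.nonneg_iff_posSemidef.mp (CFC.sqrt_nonneg A)
  have hSS : S * S = A := CFC.sqrt_mul_sqrt_self A hA.posSemidef.nonneg
  have hdetS : S.det * S.det = A.det := by rw [← Matrix.det_mul, hSS]
  have hdetSne : S.det ≠ 0 := by
    intro h; rw [h, mul_zero] at hdetS; exact hA.det_pos.ne' hdetS.symm
  have hSunit : IsUnit S := (Matrix.isUnit_iff_isUnit_det S).mpr hdetSne.isUnit
  have hSpd : S.PosDef := posDef_of_psd_isUnit hSpsd hSunit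
  have hSH : Sᴴ = S := hSpsd.1
  have hSiH : (S⁻¹)ᴴ = S⁻¹ := hSpd.inv.1
  have hSiunit : IsUnit S⁻¹ := hSpd.inv.isUnit
  have hSiS : S⁻¹ * S = 1 := Matrix.nonsing_inv_mul _ hdetSne.isUnit
  have hSSi : S * S⁻¹ = 1 := Matrix.mul_nonsing_inv _ hdetSne.isUnit
  have hM : (1 - S⁻¹ * B * S⁻¹).IsHermitian := by
    rw [Matrix.IsHermitian, Matrix.conjTranspose_sub, Matrix.conjTranspose_one,
      Matrix.conjTranspose_mul, Matrix.conjTranspose_mul, hSiH, hBH, Matrix.mul_assoc]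
  set u : Matrix (Fin p) (Fin p) ℝ := (hM.eigenvectorUnitary : Matrix (Fin p) (Fin p) ℝ)
    with hudef
  set lam : Fin p → ℝ := hM.eigenvalues with hlamdef
  have huu : u * star u = 1 := mem_unitaryGroup_iff.mp hM.eigenvectorUnitary.2
  have huu' : star u * u = 1 := mem_unitaryGroup_iff'.mp hM.eigenvectorUnitary.2
  have huunit : IsUnit u := ⟨⟨u, star u, huu, huu'⟩, rfl⟩
  have husunit : IsUnit (star u) := ⟨⟨star u, u, huu', huu⟩, rfl⟩
  have hspec : 1 - S⁻¹ * B * S⁻¹ = u * Matrix.diagonal lam * star u := by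
    simpa using hM.spectral_theorem
  set N : (Fin p → ℝ) → Matrix (Fin p) (Fin p) ℝ :=
    fun f => u * Matrix.diagonal f * star u with hNdef
  have hNmul : ∀ f g, N f * N g = N (f * g) := by
    intro f g
    simp only [hNdef, Matrix.mul_assoc]
    rw [← Matrix.mul_assoc (star u) u, huu', Matrix.one_mul,
      ← Matrix.mul_assoc (Matrix.diagonal f) (Matrix.diagonal g),
      Matrix.diagonal_mul_diagonal]
    rfl
  have hNone : N 1 = 1 := by
    show u * Matrix.diagonal 1 * star u = 1
    rw [show Matrix.diagonal (1 : Fin p → ℝ) = 1 from Matrix.diagonal_one, Matrix.mul_one, huu]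
  have hNadd : ∀ f g, N f + N g = N (f + g) := by
    intro f g
    have hd : Matrix.diagonal (f + g) = Matrix.diagonal f + Matrix.diagonal g := by
      rw [Matrix.diagonal_add]; rfl
    show _ = u * Matrix.diagonal (f + g) * star u
    rw [hd, Matrix.mul_add, Matrix.add_mul]
  have hNsub : ∀ f g, N f - N g = N (f - g) := by
    intro f g
    have hd : Matrix.diagonal (f - g) = Matrix.diagonal f - Matrix.diagonal g := by
      rw [Matrix.diagonal_sub]; rfl
    show _ = u * Matrix.diagonal (f - g) * star u
    rw [hd, Matrix.mul_sub, Matrix.sub_mul]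
  have hNsmul : ∀ (c : ℝ) f, c • N f = N (c • f) := by
    intro c f
    show _ = u * Matrix.diagonal (c • f) * star u
    rw [Matrix.diagonal_smul, Matrix.mul_smul, Matrix.smul_mul]
  have hNH : ∀ f, (N f)ᴴ = N f := by
    intro f
    show (u * Matrix.diagonal f * star u)ᴴ = u * Matrix.diagonal f * star u
    simp [Matrix.star_eq_conjTranspose, Matrix.conjTranspose_mul,
      Matrix.diagonal_conjTranspose, Matrix.mul_assoc]
  set E : (Fin p → ℝ) → Matrix (Fin p) (Fin p) ℝ := fun f => S * N f * S with hEdef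
  set E' : (Fin p → ℝ) → Matrix (Fin p) (Fin p) ℝ := fun f => S⁻¹ * N f * S⁻¹ with hE'def
  have hEadd : ∀ f g, E f + E g = E (f + g) := by
    intro f g
    show S * N f * S + S * N g * S = S * N (f + g) * S
    rw [← hNadd, Matrix.mul_add, Matrix.add_mul]
  have hEsub : ∀ f g, E f - E g = E (f - g) := by
    intro f g
    show S * N f * S - S * N g * S = S * N (f - g) * S
    rw [← hNsub, Matrix.mul_sub, Matrix.sub_mul]
  have hEsmul : ∀ (c : ℝ) f, c • E f = E (c • f) := by
    intro c f
    show c • (S * N f * S) = S * N (c • f) * S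
    rw [← hNsmul, Matrix.mul_smul, Matrix.smul_mul]
  have hE'sub : ∀ f g, E' f - E' g = E' (f - g) := by
    intro f g
    show S⁻¹ * N f * S⁻¹ - S⁻¹ * N g * S⁻¹ = S⁻¹ * N (f - g) * S⁻¹
    rw [← hNsub, Matrix.mul_sub, Matrix.sub_mul]
  have hEE' : ∀ f g, E f * E' g = S * N (f * g) * S⁻¹ := by
    intro f g
    show (S * N f * S) * (S⁻¹ * N g * S⁻¹) = S * N (f * g) * S⁻¹
    rw [← hNmul]
    simp only [Matrix.mul_assoc]
    rw [← Matrix.mul_assoc S S⁻¹ (N g * S⁻¹), hSSi, Matrix.one_mul]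
  have hE'E : ∀ f g, E' f * E g = S⁻¹ * N (f * g) * S := by
    intro f g
    show (S⁻¹ * N f * S⁻¹) * (S * N g * S) = S⁻¹ * N (f * g) * S
    rw [← hNmul]
    simp only [Matrix.mul_assoc]
    rw [← Matrix.mul_assoc S⁻¹ S (N g * S), hSiS, Matrix.one_mul]
  have htrN : ∀ f, (N f).trace = ∑ i, f i := by
    intro f
    show (u * Matrix.diagonal f * star u).trace = ∑ i, f i
    rw [Matrix.trace_mul_cycle, huu', Matrix.one_mul, Matrix.trace_diagonal]
  have htrE'E : ∀ f g, (E' f * E g).trace = ∑ i, f i * g i := by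
    intro f g
    rw [hE'E, Matrix.trace_mul_cycle, hSSi, Matrix.one_mul, htrN]
    rfl
  have hconjE : ∀ f, (S * u) * Matrix.diagonal f * (S * u)ᴴ = E f := by
    intro f
    rw [Matrix.conjTranspose_mul, hSH, ← Matrix.star_eq_conjTranspose]
    show S * u * Matrix.diagonal f * (star u * S) = S * (u * Matrix.diagonal f * star u) * S
    simp only [Matrix.mul_assoc]
  have hconjE' : ∀ f, (S⁻¹ * u) * Matrix.diagonal f * (S⁻¹ * u)ᴴ = E' f := by
    intro f
    rw [Matrix.conjTranspose_mul, hSiH, ← Matrix.star_eq_conjTranspose]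
    show S⁻¹ * u * Matrix.diagonal f * (star u * S⁻¹) =
      S⁻¹ * (u * Matrix.diagonal f * star u) * S⁻¹
    simp only [Matrix.mul_assoc]
  have hEpsd : ∀ f, (∀ i, 0 ≤ f i) → (E f).PosSemidef := by
    intro f hf
    have h1 : (Matrix.diagonal f).PosSemidef := Matrix.PosSemidef.diagonal hf
    have h2 := h1.mul_mul_conjTranspose_same (S * u)
    rwa [hconjE] at h2
  have hE'psd : ∀ f, (∀ i, 0 ≤ f i) → (E' f).PosSemidef := by
    intro f hf
    have h1 : (Matrix.diagonal f).PosSemidef := Matrix.PosSemidef.diagonal hf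
    have h2 := h1.mul_mul_conjTranspose_same (S⁻¹ * u)
    rwa [hconjE'] at h2
  have hEpd : ∀ f, (∀ i, 0 < f i) → (E f).PosDef := by
    intro f hf
    have h1 : (Matrix.diagonal f).PosDef := Matrix.posDef_diagonal_iff.mpr hf
    have h2 := posDef_conj h1 (S * u) (hSunit.mul huunit)
    rwa [hconjE] at h2
  have hEpdiff : ∀ f, (E f).PosDef → ∀ i, 0 < f i := by
    intro f hf
    have h3 : (star u * S⁻¹) * E f * (star u * S⁻¹)ᴴ = Matrix.diagonal f := by
      rw [Matrix.conjTranspose_mul, hSiH, ← Matrix.star_eq_conjTranspose, star_star]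
      show star u * S⁻¹ * (S * (u * Matrix.diagonal f * star u) * S) * (S⁻¹ * u) =
        Matrix.diagonal f
      simp only [Matrix.mul_assoc]
      rw [← Matrix.mul_assoc S⁻¹ S, hSiS, Matrix.one_mul,
        ← Matrix.mul_assoc S S⁻¹, hSSi, Matrix.one_mul, huu', Matrix.mul_one,
        ← Matrix.mul_assoc (star u) u, huu', Matrix.one_mul]
    have h2 := posDef_conj hf (star u * S⁻¹) (husunit.mul hSiunit)
    rw [h3] at h2
    exact Matrix.posDef_diagonal_iff.mp h2
  have hEinv : ∀ f, (∀ i, 0 < f i) → (E f)⁻¹ = E' (fun i => (f i)⁻¹) := by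
    intro f hf
    apply Matrix.inv_eq_right_inv
    rw [hEE']
    have h1 : (f * fun i => (f i)⁻¹) = 1 := funext fun i => mul_inv_cancel₀ (hf i).ne'
    rw [h1, hNone, Matrix.mul_one, hSSi]
  -- representations
  have hrepA : A = E 1 := by
    show A = S * N 1 * S
    rw [hNone, Matrix.mul_one, hSS]
  have hrepB : B = E (fun i => 1 - lam i) := by
    have h1 : N (fun i => 1 - lam i) = 1 - N lam := by
      rw [show (fun i => 1 - lam i) = (1 : Fin p → ℝ) - lam from rfl, ← hNsub, hNone]
    have h2 : (1 : Matrix (Fin p) (Fin p) ℝ) - N lam = S⁻¹ * B * S⁻¹ := by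
      show (1 : Matrix (Fin p) (Fin p) ℝ) - (u * Matrix.diagonal lam * star u) = S⁻¹ * B * S⁻¹
      rw [← hspec, sub_sub_cancel]
    show B = S * N (fun i => 1 - lam i) * S
    rw [h1, h2]
    have h3 : S * (S⁻¹ * B * S⁻¹) * S = (S * S⁻¹) * B * (S⁻¹ * S) := by
      simp only [Matrix.mul_assoc]
    rw [h3, hSSi, hSiS, Matrix.one_mul, Matrix.mul_one]
  have hrepPP : matPosPart (1 - S⁻¹ * B * S⁻¹) = N (fun i => max (lam i) 0) := by
    rw [matPosPart, dif_pos hM]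
  set c := ki * kj / (ki + kj) with hcdef
  have hkij : (0:ℝ) < ki + kj := by linarith
  have hcpos : 0 < c := by rw [hcdef]; positivity
  set mx : Fin p → ℝ := fun i => max (lam i) 0 with hmxdef
  have hmxnn : ∀ i, 0 ≤ mx i := fun i => le_max_right _ _
  have hmxlam : ∀ i, lam i ≤ mx i := fun i => le_max_left _ _
  have hrepY : Ystar = E (fun i => c * mx i) := by
    rw [hYstar, hrepPP]
    rw [show (fun i => c * mx i) = c • mx from rfl, ← hEsmul]
  -- feasibility eigenvalue bound
  have hrepF : ki • A + kj • B = E (fun i => ki + kj * (1 - lam i)) := by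
    have harg : (ki • (1 : Fin p → ℝ) + kj • fun i => 1 - lam i) =
        fun i => ki + kj * (1 - lam i) := by
      funext i
      simp only [Pi.add_apply, Pi.smul_apply, Pi.one_apply, smul_eq_mul]
      ring
    conv_lhs => rw [hrepA, hrepB]
    rw [hEsmul, hEsmul, hEadd, harg]
  have hlam : ∀ i, 0 < ki + kj * (1 - lam i) := by
    apply hEpdiff
    rw [← hrepF]
    exact hfeas
  -- scalar functions
  set f1 : Fin p → ℝ := fun i => 1 - ki⁻¹ * (c * mx i) with hf1def
  set f2 : Fin p → ℝ := fun i => (1 - lam i) + kj⁻¹ * (c * mx i) with hf2def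
  have hc1 : ki⁻¹ * c = kj / (ki + kj) := by
    rw [hcdef]; field_simp
  have hc2 : kj⁻¹ * c = ki / (ki + kj) := by
    rw [hcdef]; field_simp
  have hcsum : ki⁻¹ * c + kj⁻¹ * c = 1 := by
    rw [hc1, hc2, ← add_div, div_eq_one_iff_eq hkij.ne']; ring
  have hf1pos : ∀ i, 0 < f1 i := by
    intro i
    rcases le_or_gt (lam i) 0 with h | h
    · have hmx0 : mx i = 0 := max_eq_right h
      simp [hf1def, hmx0]
    · have hmxi : mx i = lam i := max_eq_left h.le
      have key : f1 i = (ki + kj * (1 - lam i)) / (ki + kj) := by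
        show 1 - ki⁻¹ * (c * mx i) = _
        rw [hmxi, show ki⁻¹ * (c * lam i) = (ki⁻¹ * c) * lam i by ring, hc1]
        field_simp
        ring
      rw [key]
      exact div_pos (hlam i) hkij
  have hf2pos : ∀ i, 0 < f2 i := by
    intro i
    rcases le_or_gt (lam i) 0 with h | h
    · have hmx0 : mx i = 0 := max_eq_right h
      show 0 < (1 - lam i) + kj⁻¹ * (c * mx i)
      rw [hmx0]
      simp only [mul_zero, add_zero]
      linarith
    · have hmxi : mx i = lam i := max_eq_left h.le
      have key : f2 i = (ki + kj * (1 - lam i)) / (ki + kj) := by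
        show (1 - lam i) + kj⁻¹ * (c * mx i) = _
        rw [hmxi, show kj⁻¹ * (c * lam i) = (kj⁻¹ * c) * lam i by ring, hc2]
        field_simp
        ring
      rw [key]
      exact div_pos (hlam i) hkij
  have hf12 : ∀ i, f1 i ≤ f2 i := by
    intro i
    show 1 - ki⁻¹ * (c * mx i) ≤ (1 - lam i) + kj⁻¹ * (c * mx i)
    have h1 : ki⁻¹ * c * mx i + kj⁻¹ * c * mx i = mx i := by
      rw [← add_mul, hcsum, one_mul]
    nlinarith [hmxlam i]
  have hfmx : ∀ i, (f1 i)⁻¹ * (c * mx i) = (f2 i)⁻¹ * (c * mx i) := by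
    intro i
    rcases le_or_gt (lam i) 0 with h | h
    · have hmx0 : mx i = 0 := max_eq_right h
      rw [hmx0, mul_zero, mul_zero, mul_zero]
    · have hmxi : mx i = lam i := max_eq_left h.le
      have heq : f1 i = f2 i := by
        show 1 - ki⁻¹ * (c * mx i) = (1 - lam i) + kj⁻¹ * (c * mx i)
        have h1 : ki⁻¹ * c * mx i + kj⁻¹ * c * mx i = mx i := by
          rw [← add_mul, hcsum, one_mul]
        rw [hmxi] at h1 ⊢
        nlinarith [h1]
      rw [heq]
  -- matrix representations of the optimal blocks
  have hrepP1 : A - ki⁻¹ • Ystar = E f1 := by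
    have harg : ((1 : Fin p → ℝ) - ki⁻¹ • fun i => c * mx i) = f1 := by
      funext i
      simp only [Pi.sub_apply, Pi.smul_apply, Pi.one_apply, smul_eq_mul, hf1def]
    rw [hrepY, hEsmul]
    conv_lhs => rw [hrepA]
    rw [hEsub, harg]
  have hrepP2 : B + kj⁻¹ • Ystar = E f2 := by
    have harg : ((fun i => 1 - lam i) + kj⁻¹ • fun i => c * mx i) = f2 := by
      funext i
      simp only [Pi.add_apply, Pi.smul_apply, smul_eq_mul, hf2def]
    rw [hrepY, hEsmul]
    conv_lhs => rw [hrepB]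
    rw [hEadd, harg]
  have hP1pd : (A - ki⁻¹ • Ystar).PosDef := by rw [hrepP1]; exact hEpd f1 hf1pos
  have hP2pd : (B + kj⁻¹ • Ystar).PosDef := by rw [hrepP2]; exact hEpd f2 hf2pos
  refine ⟨?_, ?_, ?_, ?_⟩
  · rw [hrepY]
    exact hEpsd _ fun i => mul_nonneg hcpos.le (hmxnn i)
  · have h : Ystar + kj • B = kj • (B + kj⁻¹ • Ystar) := by
      rw [smul_add, smul_smul, mul_inv_cancel₀ hkj.ne', one_smul, add_comm]
    rw [h]; exact posDef_smul hP2pd hkj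
  · have h : ki • A - Ystar = ki • (A - ki⁻¹ • Ystar) := by
      rw [smul_sub, smul_smul, mul_inv_cancel₀ hki.ne', one_smul]
    rw [h]; exact posDef_smul hP1pd hki
  · intro Y hYs hYpsd hYB hYA
    have hd1 : (A - ki⁻¹ • Y).PosDef := by
      have h : A - ki⁻¹ • Y = ki⁻¹ • (ki • A - Y) := by
        rw [smul_sub, smul_smul, inv_mul_cancel₀ hki.ne', one_smul]
      rw [h]; exact posDef_smul hYA (inv_pos.mpr hki)
    have hd2 : (B + kj⁻¹ • Y).PosDef := by
      have h : B + kj⁻¹ • Y = kj⁻¹ • (Y + kj • B) := by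
        rw [smul_add, smul_smul, inv_mul_cancel₀ hkj.ne', one_smul, add_comm]
      rw [h]; exact posDef_smul hYB (inv_pos.mpr hkj)
    have l1 := log_det_le hP1pd hd1
    have l2 := log_det_le hP2pd hd2
    set P1i := (A - ki⁻¹ • Ystar)⁻¹ with hP1i
    set P2i := (B + kj⁻¹ • Ystar)⁻¹ with hP2i
    have hP1inv : P1i * (A - ki⁻¹ • Ystar) = 1 :=
      Matrix.nonsing_inv_mul _ hP1pd.det_pos.ne'.isUnit
    have hP2inv : P2i * (B + kj⁻¹ • Ystar) = 1 :=
      Matrix.nonsing_inv_mul _ hP2pd.det_pos.ne'.isUnit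
    have htr1 : ki * ((P1i * (A - ki⁻¹ • Y)).trace) =
        ki * p - (P1i * (Y - Ystar)).trace := by
      have e1 : ki • (A - ki⁻¹ • Y) = ki • (A - ki⁻¹ • Ystar) - (Y - Ystar) := by
        rw [smul_sub, smul_sub, smul_smul, smul_smul, mul_inv_cancel₀ hki.ne',
          one_smul, one_smul]
        abel
      calc ki * ((P1i * (A - ki⁻¹ • Y)).trace)
          = (P1i * (ki • (A - ki⁻¹ • Y))).trace := by
            rw [Matrix.mul_smul, Matrix.trace_smul, smul_eq_mul]
        _ = (P1i * (ki • (A - ki⁻¹ • Ystar))).trace - (P1i * (Y - Ystar)).trace := by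
            rw [e1, Matrix.mul_sub, Matrix.trace_sub]
        _ = ki * p - (P1i * (Y - Ystar)).trace := by
            rw [Matrix.mul_smul, Matrix.trace_smul, hP1inv, Matrix.trace_one, smul_eq_mul,
              Fintype.card_fin]
    have htr2 : kj * ((P2i * (B + kj⁻¹ • Y)).trace) =
        kj * p + (P2i * (Y - Ystar)).trace := by
      have e2 : kj • (B + kj⁻¹ • Y) = kj • (B + kj⁻¹ • Ystar) + (Y - Ystar) := by
        rw [smul_add, smul_add, smul_smul, smul_smul, mul_inv_cancel₀ hkj.ne',
          one_smul, one_smul]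
        abel
      calc kj * ((P2i * (B + kj⁻¹ • Y)).trace)
          = (P2i * (kj • (B + kj⁻¹ • Y))).trace := by
            rw [Matrix.mul_smul, Matrix.trace_smul, smul_eq_mul]
        _ = (P2i * (kj • (B + kj⁻¹ • Ystar))).trace + (P2i * (Y - Ystar)).trace := by
            rw [e2, Matrix.mul_add, Matrix.trace_add]
        _ = kj * p + (P2i * (Y - Ystar)).trace := by
            rw [Matrix.mul_smul, Matrix.trace_smul, hP2inv, Matrix.trace_one, smul_eq_mul,
              Fintype.card_fin]
    have hinv1 : P1i = E' (fun i => (f1 i)⁻¹) := by rw [hP1i, hrepP1]; exact hEinv f1 hf1pos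
    have hinv2 : P2i = E' (fun i => (f2 i)⁻¹) := by rw [hP2i, hrepP2]; exact hEinv f2 hf2pos
    have hGrep : P2i - P1i = E' (fun i => (f2 i)⁻¹ - (f1 i)⁻¹) := by
      rw [hinv1, hinv2, hE'sub]
      exact congrArg E' (funext fun i => rfl)
    have hGYstar : ((P2i - P1i) * Ystar).trace = 0 := by
      rw [hGrep, hrepY, htrE'E]
      apply Finset.sum_eq_zero
      intro i _
      rw [sub_mul, ← hfmx i, sub_self]
    have hGY : ((P2i - P1i) * Y).trace ≤ 0 := by
      have hneg : (P1i - P2i).PosSemidef := by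
        have h : P1i - P2i = E' (fun i => (f1 i)⁻¹ - (f2 i)⁻¹) := by
          rw [hinv1, hinv2, hE'sub]
          exact congrArg E' (funext fun i => rfl)
        rw [h]
        apply hE'psd
        intro i
        have h2 : (f2 i)⁻¹ ≤ (f1 i)⁻¹ := by
          apply inv_anti₀ (hf1pos i) (hf12 i)
        linarith
      have h0 := trace_mul_psd_nonneg hneg hYpsd
      have h1 : (P2i - P1i) * Y = -((P1i - P2i) * Y) := by
        rw [← Matrix.neg_mul, neg_sub]
      rw [h1, Matrix.trace_neg]
      linarith
    have hsplit : (P2i * (Y - Ystar)).trace - (P1i * (Y - Ystar)).trace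
        = ((P2i - P1i) * Y).trace - ((P2i - P1i) * Ystar).trace := by
      rw [Matrix.sub_mul, Matrix.sub_mul, Matrix.trace_sub, Matrix.trace_sub,
        Matrix.mul_sub, Matrix.mul_sub, Matrix.trace_sub, Matrix.trace_sub]
      ring
    clear_value P1i P2i
    have hba : (P2i * (Y - Ystar)).trace - (P1i * (Y - Ystar)).trace ≤ 0 := by
      rw [hsplit, hGYstar, sub_zero]
      exact hGY
    have hcomb : ki * ((P1i * (A - ki⁻¹ • Y)).trace) + kj * ((P2i * (B + kj⁻¹ • Y)).trace)
        ≤ ki * p + kj * p := by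
      rw [htr1, htr2]
      linarith [hba]
    exact combine_final hki hkj l1 l2 hcomb
end

section
/- Let p ≥ 1, let k_i, k_j > 0 be real numbers, and let C be a symmetric real p×p matrix with −k_j·C ≺ k_i·I. Define X* := (k_i k_j/(k_i+k_j)) · (I − C)₊. Then X* ⪰ O, −k_j·C ≺ X* ≺ k_i·I, and for every symmetric X with X ⪰ O and −k_j·C ≺ X ≺ k_i·I one has k_i·log det(I − X/k_i) + k_j·log det(C + X/k_j) ≤ k_i·log det(I − X*/k_i) + k_j·log det(C + X*/k_j). -/
open Matrix Finset

section Helpers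

lemma herm_smul {n : Type*} [Fintype n] {A : Matrix n n ℝ} (hA : A.IsHermitian) (c : ℝ) :
    (c • A).IsHermitian := by
  rw [Matrix.IsHermitian, conjTranspose_smul, hA.eq, star_trivial]

lemma posDef_smul_s2 {n : Type*} [Fintype n] {A : Matrix n n ℝ} (hA : A.PosDef) {c : ℝ}
    (hc : 0 < c) : (c • A).PosDef := by
  refine posDef_iff_dotProduct_mulVec.mpr ⟨herm_smul hA.1 c, fun x hx => ?_⟩
  rw [smul_mulVec, dotProduct_smul]
  exact smul_pos hc (hA.dotProduct_mulVec_pos hx)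

lemma posDef_diag_pos {n : Type*} [Fintype n] [DecidableEq n] {A : Matrix n n ℝ}
    (hA : A.PosDef) (i : n) : 0 < A i i := by
  exact hA.diag_pos

lemma posSemidef_diag_nonneg {n : Type*} [Fintype n] [DecidableEq n] {A : Matrix n n ℝ}
    (hA : A.PosSemidef) (i : n) : 0 ≤ A i i := by
  exact hA.diag_nonneg

lemma posDef_conj_s2 {n : Type*} [Fintype n] [DecidableEq n] {A B : Matrix n n ℝ}
    (hA : A.PosDef) (hB : IsUnit B) : (B * A * Bᴴ).PosDef := by
  refine posDef_iff_dotProduct_mulVec.mpr ⟨?_, ?_⟩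
  · simpa using isHermitian_conjTranspose_mul_mul Bᴴ hA.1
  · intro x hx
    have hBH : Function.Injective (Bᴴ).mulVec := by
      rw [mulVec_injective_iff_isUnit]
      exact (isUnit_conjTranspose B).mpr hB
    have hx' : Bᴴ *ᵥ x ≠ 0 := by
      intro h
      exact hx (hBH (by simpa using h))
    simpa only [star_mulVec, conjTranspose_conjTranspose, dotProduct_mulVec,
      vecMul_vecMul] using hA.dotProduct_mulVec_pos hx'

lemma trace_eq_sum_eigs {n : Type*} [Fintype n] [DecidableEq n] {A : Matrix n n ℝ}
    (hA : A.IsHermitian) : A.trace = ∑ i, hA.eigenvalues i := by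
  conv_lhs => rw [hA.spectral_theorem]
  rw [Unitary.conjStarAlgAut_apply]
  rw [Matrix.trace_mul_cycle]
  have h1 : (star hA.eigenvectorUnitary : Matrix n n ℝ) * hA.eigenvectorUnitary = 1 := by
    exact_mod_cast (Matrix.mem_unitaryGroup_iff').mp hA.eigenvectorUnitary.2
  rw [h1, Matrix.one_mul, Matrix.trace_diagonal]
  simp [RCLike.ofReal]

/-- Hadamard's determinant inequality for real positive definite matrices. -/
lemma det_le_prod_diag {n : Type*} [Fintype n] [DecidableEq n] {A : Matrix n n ℝ}
    (hA : A.PosDef) : A.det ≤ ∏ i, A i i := by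
  have hd : ∀ i, 0 < A i i := fun i => posDef_diag_pos hA i
  set f : n → ℝ := fun i => (Real.sqrt (A i i))⁻¹ with hf
  have hfpos : ∀ i, 0 < f i := fun i => inv_pos.mpr (Real.sqrt_pos.mpr (hd i))
  have hfU : IsUnit (diagonal f) := by
    rw [Matrix.isUnit_iff_isUnit_det, det_diagonal]
    exact (Finset.prod_pos (fun i _ => hfpos i)).ne'.isUnit
  have hdiagH : (diagonal f)ᴴ = diagonal f := by rw [diagonal_conjTranspose]; simp
  have hBpd : (diagonal f * A * diagonal f).PosDef := by
    have := posDef_conj_s2 hA hfU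
    rwa [hdiagH] at this
  set B := diagonal f * A * diagonal f with hB
  have hBdiag : ∀ i, B i i = 1 := by
    intro i
    have hs : Real.sqrt (A i i) * Real.sqrt (A i i) = A i i := Real.mul_self_sqrt (hd i).le
    rw [hB, Matrix.mul_diagonal, Matrix.diagonal_mul, hf]
    rw [show (Real.sqrt (A i i))⁻¹ * A i i * (Real.sqrt (A i i))⁻¹
        = A i i * ((Real.sqrt (A i i))⁻¹ * (Real.sqrt (A i i))⁻¹) by ring, ← mul_inv, hs]
    exact mul_inv_cancel₀ (hd i).ne' 
  have hBH := hBpd.isHermitian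
  have heigpos : ∀ i, 0 < hBH.eigenvalues i := hBpd.eigenvalues_pos
  have htr : B.trace = ∑ i, hBH.eigenvalues i := trace_eq_sum_eigs hBH
  have htr' : B.trace = (Fintype.card n : ℝ) := by
    rw [Matrix.trace]
    simp only [Matrix.diag_apply, hBdiag]
    simp
  have hdetB : B.det = ∏ i, hBH.eigenvalues i := by
    have := hBH.det_eq_prod_eigenvalues
    simpa using this
  have hdetB1 : B.det ≤ 1 := by
    rw [hdetB]
    calc ∏ i, hBH.eigenvalues i ≤ ∏ i, Real.exp (hBH.eigenvalues i - 1) := by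
          apply Finset.prod_le_prod (fun i _ => (heigpos i).le)
          intro i _
          have := Real.add_one_le_exp (hBH.eigenvalues i - 1)
          linarith
      _ = Real.exp (∑ i, (hBH.eigenvalues i - 1)) := by rw [Real.exp_sum]
      _ = 1 := by
          rw [Finset.sum_sub_distrib, ← htr, htr']
          simp
  have hdetprod : B.det = ((∏ i, f i) * A.det) * ∏ i, f i := by
    rw [hB, Matrix.det_mul, Matrix.det_mul, det_diagonal]
  have hAiip : 0 < ∏ i, A i i := Finset.prod_pos (fun i _ => hd i)
  have hff : (∏ i, f i) * (∏ i, f i) * ∏ i, A i i = 1 := by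
    rw [← Finset.prod_mul_distrib, ← Finset.prod_mul_distrib]
    rw [Finset.prod_eq_one]
    intro i _
    have hs : Real.sqrt (A i i) * Real.sqrt (A i i) = A i i := Real.mul_self_sqrt (hd i).le
    rw [hf]
    rw [show (Real.sqrt (A i i))⁻¹ * (Real.sqrt (A i i))⁻¹ * A i i
        = A i i * ((Real.sqrt (A i i))⁻¹ * (Real.sqrt (A i i))⁻¹) by ring, ← mul_inv, hs]
    exact mul_inv_cancel₀ (hd i).ne' 
  have hfin : A.det = B.det * ∏ i, A i i := by
    calc A.det = A.det * (((∏ i, f i) * ∏ i, f i) * ∏ i, A i i) := by rw [hff]; ring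
      _ = B.det * ∏ i, A i i := by rw [hdetprod]; ring
  rw [hfin]
  nlinarith [hdetB1, hAiip]

lemma scalar_pos_a {ki kj μ : ℝ} (hki : 0 < ki) (hkj : 0 < kj)
    (hfeas : 0 < ki + kj * (1 - μ)) :
    0 < 1 - ki⁻¹ * (ki * kj / (ki + kj) * max μ 0) := by
  rcases le_or_gt μ 0 with h | h
  · rw [max_eq_right h]; norm_num
  · rw [max_eq_left h.le]
    have hs : 0 < ki + kj := by linarith
    rw [show ki⁻¹ * (ki * kj / (ki + kj) * μ) = kj * μ / (ki + kj) by field_simp]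
    rw [sub_pos, div_lt_one hs]
    nlinarith

lemma scalar_pos_b {ki kj μ : ℝ} (hki : 0 < ki) (hkj : 0 < kj)
    (hfeas : 0 < ki + kj * (1 - μ)) :
    0 < (1 - μ) + kj⁻¹ * (ki * kj / (ki + kj) * max μ 0) := by
  rcases le_or_gt μ 0 with h | h
  · rw [max_eq_right h]; simp; linarith
  · rw [max_eq_left h.le]
    have hs : 0 < ki + kj := by linarith
    rw [show kj⁻¹ * (ki * kj / (ki + kj) * μ) = ki * μ / (ki + kj) by field_simp]
    rw [show (1 - μ) + ki * μ / (ki + kj) = (ki + kj * (1 - μ)) / (ki + kj) by field_simp; ring]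
    positivity

lemma scalar_key {ki kj μ y : ℝ} (hki : 0 < ki) (hkj : 0 < kj)
    (hfeas : 0 < ki + kj * (1 - μ)) (hy : 0 ≤ y)
    (h1 : 0 < 1 - ki⁻¹ * y) (h2 : 0 < (1 - μ) + kj⁻¹ * y) :
    ki * Real.log (1 - ki⁻¹ * y) + kj * Real.log ((1 - μ) + kj⁻¹ * y) ≤
      ki * Real.log (1 - ki⁻¹ * (ki * kj / (ki + kj) * max μ 0)) +
        kj * Real.log ((1 - μ) + kj⁻¹ * (ki * kj / (ki + kj) * max μ 0)) := by
  set c := ki * kj / (ki + kj) with hc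
  set m := max μ 0 with hm
  set a := 1 - ki⁻¹ * (c * m) with ha'
  set b := (1 - μ) + kj⁻¹ * (c * m) with hb'
  have ha : 0 < a := scalar_pos_a hki hkj hfeas
  have hb : 0 < b := scalar_pos_b hki hkj hfeas
  set x1 := 1 - ki⁻¹ * y with hx1
  set x2 := (1 - μ) + kj⁻¹ * y with hx2
  have l1 : Real.log x1 - Real.log a ≤ (x1 - a) / a := by
    have := Real.log_le_sub_one_of_pos (show 0 < x1 / a from div_pos h1 ha)
    rw [Real.log_div h1.ne' ha.ne'] at this
    have h' : x1 / a - 1 = (x1 - a) / a := by field_simp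
    linarith [h'.symm ▸ this]
  have l2 : Real.log x2 - Real.log b ≤ (x2 - b) / b := by
    have := Real.log_le_sub_one_of_pos (show 0 < x2 / b from div_pos h2 hb)
    rw [Real.log_div h2.ne' hb.ne'] at this
    have h' : x2 / b - 1 = (x2 - b) / b := by field_simp
    linarith [h'.symm ▸ this]
  have e1 : ki * ((x1 - a) / a) = (c * m - y) / a := by
    rw [hx1, ha']; field_simp; ring
  have e2 : kj * ((x2 - b) / b) = (y - c * m) / b := by
    rw [hx2, hb']; field_simp; ring
  have key : (c * m - y) / a + (y - c * m) / b ≤ 0 := by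
    rcases le_or_gt μ 0 with h | h
    · have hm0 : m = 0 := max_eq_right h
      have hab : a = 1 := by rw [ha', hm0]; ring
      have hbb : b = 1 - μ := by rw [hb', hm0]; ring
      rw [hm0, hab, hbb]
      have hb1 : (1:ℝ) ≤ 1 - μ := by linarith
      rw [show (c * 0 - y) / 1 + (y - c * 0) / (1 - μ) = -y + y / (1 - μ) by ring]
      have : y / (1 - μ) ≤ y := by
        apply div_le_self hy; linarith
      linarith
    · have hm0 : m = μ := max_eq_left h.le
      have hs : 0 < ki + kj := by linarith
      have hab : a = b := by
        rw [ha', hb', hm0, hc]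
        field_simp
        ring
      rw [hab, ← add_div, show c * m - y + (y - c * m) = 0 by ring]
      simp
  nlinarith [mul_le_mul_of_nonneg_left l1 hki.le, mul_le_mul_of_nonneg_left l2 hkj.le]

end Helpers

set_option maxHeartbeats 1000000 in
/-- `X* := (kᵢkⱼ/(kᵢ+kⱼ)) (I − C)₊` satisfies `X* ⪰ O`,
`−kⱼC ≺ X* ≺ kᵢI`, and maximizes `kᵢ log det(I − X/kᵢ) + kⱼ log det(C + X/kⱼ)` over all
symmetric `X` with `X ⪰ O` and `−kⱼC ≺ X ≺ kᵢI`. -/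
theorem stmt2 {p : ℕ} (hp : 1 ≤ p) (ki kj : ℝ) (hki : 0 < ki) (hkj : 0 < kj)
    (C : Matrix (Fin p) (Fin p) ℝ) (hCs : C.IsSymm)
    (hfeas : (ki • (1 : Matrix (Fin p) (Fin p) ℝ) + kj • C).PosDef)
    (Xstar : Matrix (Fin p) (Fin p) ℝ)
    (hXstar : Xstar = (ki * kj / (ki + kj)) • matPosPart (1 - C)) :
    Xstar.PosSemidef ∧ (Xstar + kj • C).PosDef ∧
    (ki • (1 : Matrix (Fin p) (Fin p) ℝ) - Xstar).PosDef ∧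
    ∀ X : Matrix (Fin p) (Fin p) ℝ, X.IsSymm → X.PosSemidef → (X + kj • C).PosDef →
      (ki • (1 : Matrix (Fin p) (Fin p) ℝ) - X).PosDef →
      ki * Real.log (1 - ki⁻¹ • X).det + kj * Real.log (C + kj⁻¹ • X).det ≤
        ki * Real.log (1 - ki⁻¹ • Xstar).det + kj * Real.log (C + kj⁻¹ • Xstar).det := by
  have hsum : 0 < ki + kj := by linarith
  set c := ki * kj / (ki + kj) with hc
  have hcpos : 0 < c := by positivity
  have hCH : C.IsHermitian := by
    rw [Matrix.IsHermitian, conjTranspose_eq_transpose_of_trivial]; exact hCs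
  have hH : (1 - C).IsHermitian := by
    rw [Matrix.IsHermitian, conjTranspose_sub, conjTranspose_one, hCH.eq]
  set U : Matrix (Fin p) (Fin p) ℝ := (hH.eigenvectorUnitary : Matrix (Fin p) (Fin p) ℝ)
    with hU
  set V : Matrix (Fin p) (Fin p) ℝ := star U with hV
  set μ : Fin p → ℝ := hH.eigenvalues with hμ
  have hUV : U * V = 1 := (Matrix.mem_unitaryGroup_iff).mp hH.eigenvectorUnitary.2
  have hVU : V * U = 1 := (Matrix.mem_unitaryGroup_iff').mp hH.eigenvectorUnitary.2
  have hUunit : IsUnit U := ⟨⟨U, V, hUV, hVU⟩, rfl⟩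
  have hVunit : IsUnit V := ⟨⟨V, U, hVU, hUV⟩, rfl⟩
  have hco : (RCLike.ofReal ∘ μ : Fin p → ℝ) = μ := by
    funext i; simp [RCLike.ofReal]
  have hspec : 1 - C = U * Matrix.diagonal μ * V := by
    have h := hH.spectral_theorem
    rw [hco] at h
    exact h
  have conj_eq : ∀ M : Matrix (Fin p) (Fin p) ℝ, V * (U * M * V) * U = M := by
    intro M
    simp only [← Matrix.mul_assoc]
    rw [hVU, Matrix.one_mul, Matrix.mul_assoc, hVU, Matrix.mul_one]
  have hdetD : ∀ d : Fin p → ℝ, (U * diagonal d * V).det = ∏ i, d i := by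
    intro d
    have h1 : V.det * U.det = 1 := by rw [← Matrix.det_mul, hVU, Matrix.det_one]
    rw [Matrix.det_mul, Matrix.det_mul, det_diagonal]
    calc U.det * (∏ i, d i) * V.det = (∏ i, d i) * (V.det * U.det) := by ring
      _ = ∏ i, d i := by rw [h1, mul_one]
  have hdetVU : ∀ M : Matrix (Fin p) (Fin p) ℝ, (V * M * U).det = M.det := by
    intro M
    have h1 : V.det * U.det = 1 := by rw [← Matrix.det_mul, hVU, Matrix.det_one]
    rw [Matrix.det_mul, Matrix.det_mul]
    calc V.det * M.det * U.det = M.det * (V.det * U.det) := by ring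
      _ = M.det := by rw [h1, mul_one]
  have hPD : ∀ d : Fin p → ℝ, (∀ i, 0 < d i) → (U * diagonal d * V).PosDef := by
    intro d hd
    have := posDef_conj_s2 (Matrix.PosDef.diagonal hd) hUunit
    rwa [← Matrix.star_eq_conjTranspose, ← hV] at this
  have hPDrev : ∀ M : Matrix (Fin p) (Fin p) ℝ, M.PosDef → (V * M * U).PosDef := by
    intro M hM
    have := posDef_conj_s2 hM hVunit
    rwa [← Matrix.star_eq_conjTranspose, hV, star_star] at this
  have hPD' : ∀ d : Fin p → ℝ, (U * diagonal d * V).PosDef → ∀ i, 0 < d i := by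
    intro d hpd i
    have := hPDrev _ hpd
    rw [conj_eq] at this
    exact (Matrix.posDef_diagonal_iff).mp this i
  have hPSD : ∀ d : Fin p → ℝ, (∀ i, 0 ≤ d i) → (U * diagonal d * V).PosSemidef := by
    intro d hd
    have := (Matrix.posSemidef_diagonal_iff.mpr hd).mul_mul_conjTranspose_same U
    rwa [← Matrix.star_eq_conjTranspose, ← hV] at this
  -- representation of C
  have hdsub : diagonal (fun i => 1 - μ i) = (1 : Matrix (Fin p) (Fin p) ℝ) - diagonal μ := by
    rw [← Matrix.diagonal_one, ← Matrix.diagonal_sub]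
  have hC : C = U * diagonal (fun i => 1 - μ i) * V := by
    rw [hdsub, Matrix.mul_sub, Matrix.mul_one, Matrix.sub_mul, hUV, ← hspec]
    simp
  -- representation of Xstar
  have hds : diagonal (fun i => c * max (μ i) 0)
      = c • diagonal (fun i => max (μ i) 0) := by
    ext i j
    rcases eq_or_ne i j with h | h <;> simp [h, Matrix.diagonal_apply]
  have hXs' : Xstar = U * diagonal (fun i => c * max (μ i) 0) * V := by
    rw [hXstar, matPosPart, dif_pos hH]
    rw [show ((star hH.eigenvectorUnitary : Matrix (Fin p) (Fin p) ℝ)) = V by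
      rw [hV, hU]]
    rw [hds, mul_smul_comm, smul_mul_assoc]
  -- feasibility in eigenvalue terms
  have hfeasd : ∀ i, 0 < ki + kj * (1 - μ i) := by
    apply hPD'
    have : U * diagonal (fun i => ki + kj * (1 - μ i)) * V
        = ki • (1 : Matrix (Fin p) (Fin p) ℝ) + kj • C := by
      have hdd : diagonal (fun i => ki + kj * (1 - μ i))
          = ki • (1 : Matrix (Fin p) (Fin p) ℝ) + kj • diagonal (fun i => 1 - μ i) := by
        ext i j
        rcases eq_or_ne i j with h | h <;>
          simp [h, Matrix.diagonal_apply, Matrix.one_apply]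
      rw [hdd, Matrix.mul_add, Matrix.add_mul, hC]
      congr 1
      · rw [mul_smul_comm, smul_mul_assoc, Matrix.mul_one, hUV]
      · rw [mul_smul_comm, smul_mul_assoc]
    rw [this]
    exact hfeas
  -- the three structural claims
  have claim1 : Xstar.PosSemidef := by
    rw [hXs']
    exact hPSD _ (fun i => mul_nonneg hcpos.le (le_max_right _ 0))
  have claim2 : (Xstar + kj • C).PosDef := by
    have hrep : Xstar + kj • C
        = U * diagonal (fun i => c * max (μ i) 0 + kj * (1 - μ i)) * V := by
      rw [hXs', hC]
      rw [show diagonal (fun i => c * max (μ i) 0 + kj * (1 - μ i))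
          = diagonal (fun i => c * max (μ i) 0) + kj • diagonal (fun i => 1 - μ i) by
        ext i j
        rcases eq_or_ne i j with h | h <;> simp [h, Matrix.diagonal_apply]]
      rw [Matrix.mul_add, Matrix.add_mul]
      congr 1
      rw [mul_smul_comm, smul_mul_assoc]
    rw [hrep]
    apply hPD
    intro i
    have h1 := hfeasd i
    have h2 := scalar_pos_b (μ := μ i) hki hkj h1
    rcases le_or_gt (μ i) 0 with h | h
    · rw [max_eq_right h]; nlinarith
    · rw [max_eq_left h.le]
      have := scalar_pos_b (μ := μ i) hki hkj h1
      rw [max_eq_left h.le] at this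
      have hb' : 0 < kj * ((1 - μ i) + kj⁻¹ * (c * μ i)) := by positivity
      calc (0:ℝ) < kj * ((1 - μ i) + kj⁻¹ * (c * μ i)) := hb'
        _ = c * μ i + kj * (1 - μ i) := by field_simp; ring
  have claim3 : (ki • (1 : Matrix (Fin p) (Fin p) ℝ) - Xstar).PosDef := by
    have hrep : ki • (1 : Matrix (Fin p) (Fin p) ℝ) - Xstar
        = U * diagonal (fun i => ki - c * max (μ i) 0) * V := by
      rw [hXs']
      rw [show diagonal (fun i => ki - c * max (μ i) 0)
          = ki • (1 : Matrix (Fin p) (Fin p) ℝ) - diagonal (fun i => c * max (μ i) 0) by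
        ext i j
        rcases eq_or_ne i j with h | h <;>
          simp [h, Matrix.diagonal_apply, Matrix.one_apply]]
      rw [Matrix.mul_sub, Matrix.sub_mul]
      congr 1
      rw [mul_smul_comm, smul_mul_assoc, Matrix.mul_one, hUV]
    rw [hrep]
    apply hPD
    intro i
    have h1 := hfeasd i
    have := scalar_pos_a (μ := μ i) hki hkj h1
    have hk' : 0 < ki * (1 - ki⁻¹ * (c * max (μ i) 0)) := by positivity
    calc (0:ℝ) < ki * (1 - ki⁻¹ * (c * max (μ i) 0)) := hk'
      _ = ki - c * max (μ i) 0 := by field_simp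
  refine ⟨claim1, claim2, claim3, ?_⟩
  -- the optimality claim
  intro X hXsymm hXpsd h2 h3
  -- representations of the Xstar-objective
  have hrepA : (1 : Matrix (Fin p) (Fin p) ℝ) - ki⁻¹ • Xstar
      = U * diagonal (fun i => 1 - ki⁻¹ * (c * max (μ i) 0)) * V := by
    rw [hXs']
    rw [show diagonal (fun i => 1 - ki⁻¹ * (c * max (μ i) 0))
        = (1 : Matrix (Fin p) (Fin p) ℝ) - ki⁻¹ • diagonal (fun i => c * max (μ i) 0) by
      ext i j
      rcases eq_or_ne i j with h | h <;>
        simp [h, Matrix.diagonal_apply, Matrix.one_apply]]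
    rw [Matrix.mul_sub, Matrix.sub_mul, Matrix.mul_one, hUV]
    congr 1
    rw [mul_smul_comm, smul_mul_assoc]
  have hrepB : C + kj⁻¹ • Xstar
      = U * diagonal (fun i => (1 - μ i) + kj⁻¹ * (c * max (μ i) 0)) * V := by
    rw [hXs', hC]
    rw [show diagonal (fun i => (1 - μ i) + kj⁻¹ * (c * max (μ i) 0))
        = diagonal (fun i => 1 - μ i) + kj⁻¹ • diagonal (fun i => c * max (μ i) 0) by
      ext i j
      rcases eq_or_ne i j with h | h <;> simp [h, Matrix.diagonal_apply]]
    rw [Matrix.mul_add, Matrix.add_mul]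
    congr 1
    rw [mul_smul_comm, smul_mul_assoc]
  have hapos : ∀ i, 0 < 1 - ki⁻¹ * (c * max (μ i) 0) := by
    intro i
    have := scalar_pos_a (μ := μ i) hki hkj (hfeasd i)
    rwa [← hc] at this
  have hbpos : ∀ i, 0 < (1 - μ i) + kj⁻¹ * (c * max (μ i) 0) := by
    intro i
    have := scalar_pos_b (μ := μ i) hki hkj (hfeasd i)
    rwa [← hc] at this
  have hdetXsA : (1 - ki⁻¹ • Xstar).det = ∏ i, (1 - ki⁻¹ * (c * max (μ i) 0)) := by
    rw [hrepA, hdetD]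
  have hdetXsB : (C + kj⁻¹ • Xstar).det = ∏ i, ((1 - μ i) + kj⁻¹ * (c * max (μ i) 0)) := by
    rw [hrepB, hdetD]
  have hlogXsA : Real.log (1 - ki⁻¹ • Xstar).det
      = ∑ i, Real.log (1 - ki⁻¹ * (c * max (μ i) 0)) := by
    rw [hdetXsA, Real.log_prod]
    intro i _
    exact (hapos i).ne'
  have hlogXsB : Real.log (C + kj⁻¹ • Xstar).det
      = ∑ i, Real.log ((1 - μ i) + kj⁻¹ * (c * max (μ i) 0)) := by
    rw [hdetXsB, Real.log_prod]
    intro i _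
    exact (hbpos i).ne'
  -- handle X
  set Y := V * X * U with hY
  have hYpsd : Y.PosSemidef := by
    have := hXpsd.mul_mul_conjTranspose_same V
    rwa [← Matrix.star_eq_conjTranspose, hV, star_star] at this
  have hy : ∀ i, 0 ≤ Y i i := posSemidef_diag_nonneg hYpsd
  have hA1 : ((1 : Matrix (Fin p) (Fin p) ℝ) - ki⁻¹ • X).PosDef := by
    have := posDef_smul_s2 h3 (inv_pos.mpr hki)
    rwa [smul_sub, smul_smul, inv_mul_cancel₀ hki.ne', one_smul] at this
  have hB1 : (C + kj⁻¹ • X).PosDef := by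
    have := posDef_smul_s2 h2 (inv_pos.mpr hkj)
    rwa [smul_add, smul_smul, inv_mul_cancel₀ hkj.ne', one_smul, add_comm] at this
  have hA1c : V * ((1 : Matrix (Fin p) (Fin p) ℝ) - ki⁻¹ • X) * U
      = 1 - ki⁻¹ • Y := by
    rw [Matrix.mul_sub, Matrix.sub_mul, Matrix.mul_one, hVU]
    congr 1
    rw [mul_smul_comm, smul_mul_assoc, hY]
  have hB1c : V * (C + kj⁻¹ • X) * U
      = diagonal (fun i => 1 - μ i) + kj⁻¹ • Y := by
    rw [Matrix.mul_add, Matrix.add_mul]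
    congr 1
    · rw [hC, conj_eq]
    · rw [mul_smul_comm, smul_mul_assoc, hY]
  have hA1cpd : ((1 : Matrix (Fin p) (Fin p) ℝ) - ki⁻¹ • Y).PosDef := by
    have := hPDrev _ hA1
    rwa [hA1c] at this
  have hB1cpd : (diagonal (fun i => 1 - μ i) + kj⁻¹ • Y).PosDef := by
    have := hPDrev _ hB1
    rwa [hB1c] at this
  have hdet1 : ((1 : Matrix (Fin p) (Fin p) ℝ) - ki⁻¹ • X).det
      = ((1 : Matrix (Fin p) (Fin p) ℝ) - ki⁻¹ • Y).det := by
    rw [← hA1c, hdetVU]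
  have hdet2 : (C + kj⁻¹ • X).det
      = (diagonal (fun i => 1 - μ i) + kj⁻¹ • Y).det := by
    rw [← hB1c, hdetVU]
  -- diagonal entries
  have hentA : ∀ i, ((1 : Matrix (Fin p) (Fin p) ℝ) - ki⁻¹ • Y) i i
      = 1 - ki⁻¹ * Y i i := by
    intro i
    simp [Matrix.sub_apply, Matrix.smul_apply, Matrix.one_apply_eq, smul_eq_mul]
  have hentB : ∀ i, (diagonal (fun i => 1 - μ i) + kj⁻¹ • Y) i i
      = (1 - μ i) + kj⁻¹ * Y i i := by
    intro i
    simp [Matrix.add_apply, Matrix.smul_apply, Matrix.diagonal_apply_eq, smul_eq_mul]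
  have hdpA : ∀ i, 0 < 1 - ki⁻¹ * Y i i := by
    intro i
    have := posDef_diag_pos hA1cpd i
    rwa [hentA i] at this
  have hdpB : ∀ i, 0 < (1 - μ i) + kj⁻¹ * Y i i := by
    intro i
    have := posDef_diag_pos hB1cpd i
    rwa [hentB i] at this
  -- Hadamard bounds
  have hadA : ((1 : Matrix (Fin p) (Fin p) ℝ) - ki⁻¹ • Y).det
      ≤ ∏ i, (1 - ki⁻¹ * Y i i) := by
    refine le_trans (det_le_prod_diag hA1cpd) (le_of_eq ?_)
    exact Finset.prod_congr rfl (fun i _ => hentA i)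
  have hadB : (diagonal (fun i => 1 - μ i) + kj⁻¹ • Y).det
      ≤ ∏ i, ((1 - μ i) + kj⁻¹ * Y i i) := by
    refine le_trans (det_le_prod_diag hB1cpd) (le_of_eq ?_)
    exact Finset.prod_congr rfl (fun i _ => hentB i)
  -- log bounds
  have hlogA : Real.log ((1 : Matrix (Fin p) (Fin p) ℝ) - ki⁻¹ • X).det
      ≤ ∑ i, Real.log (1 - ki⁻¹ * Y i i) := by
    rw [hdet1, ← Real.log_prod (fun i _ => (hdpA i).ne')]
    exact Real.log_le_log hA1cpd.det_pos hadA
  have hlogB : Real.log (C + kj⁻¹ • X).det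
      ≤ ∑ i, Real.log ((1 - μ i) + kj⁻¹ * Y i i) := by
    rw [hdet2, ← Real.log_prod (fun i _ => (hdpB i).ne')]
    exact Real.log_le_log hB1cpd.det_pos hadB
  -- combine
  have hsumineq : ∑ i, (ki * Real.log (1 - ki⁻¹ * Y i i)
        + kj * Real.log ((1 - μ i) + kj⁻¹ * Y i i))
      ≤ ∑ i, (ki * Real.log (1 - ki⁻¹ * (c * max (μ i) 0))
        + kj * Real.log ((1 - μ i) + kj⁻¹ * (c * max (μ i) 0))) := by
    apply Finset.sum_le_sum
    intro i _
    have := scalar_key (μ := μ i) (y := Y i i) hki hkj (hfeasd i) (hy i) (hdpA i) (hdpB i)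
    rwa [← hc] at this
  calc ki * Real.log (1 - ki⁻¹ • X).det + kj * Real.log (C + kj⁻¹ • X).det
      ≤ ki * (∑ i, Real.log (1 - ki⁻¹ * Y i i))
        + kj * (∑ i, Real.log ((1 - μ i) + kj⁻¹ * Y i i)) := by
        have a1 := mul_le_mul_of_nonneg_left hlogA hki.le
        have a2 := mul_le_mul_of_nonneg_left hlogB hkj.le
        linarith
    _ = ∑ i, (ki * Real.log (1 - ki⁻¹ * Y i i)
        + kj * Real.log ((1 - μ i) + kj⁻¹ * Y i i)) := by
        rw [Finset.sum_add_distrib, Finset.mul_sum, Finset.mul_sum]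
    _ ≤ ∑ i, (ki * Real.log (1 - ki⁻¹ * (c * max (μ i) 0))
        + kj * Real.log ((1 - μ i) + kj⁻¹ * (c * max (μ i) 0))) := hsumineq
    _ = ki * Real.log (1 - ki⁻¹ • Xstar).det + kj * Real.log (C + kj⁻¹ • Xstar).det := by
        rw [hlogXsA, hlogXsB, Finset.sum_add_distrib, Finset.mul_sum, Finset.mul_sum]
end

section
/- Let p ≥ 1, let k_i, k_j > 0 be real numbers, and let C be a symmetric real p×p matrix with −k_j·C ≺ k_i·I. Then the matrix X* := (k_i k_j/(k_i+k_j)) · (I − C)₊ satisfies X* ⪰ O, −k_j·C ≺ X*, and X* ≺ k_i·I. -/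
open Matrix in
/-- Congruence by a matrix with injective `mulVec` preserves positive definiteness. -/
lemma posDef_conj_aux {p : ℕ} {A B : Matrix (Fin p) (Fin p) ℝ} (hA : A.PosDef)
    (hB : Function.Injective B.mulVec) : (Bᴴ * A * B).PosDef := by
  refine Matrix.PosDef.of_dotProduct_mulVec_pos (Matrix.isHermitian_conjTranspose_mul_mul B hA.1) fun x hx => ?_
  have hBx : B *ᵥ x ≠ 0 := fun h => hx (hB (by simpa using h))
  simpa only [star_mulVec, dotProduct_mulVec, vecMul_vecMul] using hA.dotProduct_mulVec_pos hBx

open Matrix in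
/-- `U diag(f) U⋆` for a unitary `U`. -/
noncomputable def cgDiag {p : ℕ} (U : Matrix.unitaryGroup (Fin p) ℝ) (f : Fin p → ℝ) :
    Matrix (Fin p) (Fin p) ℝ :=
  (U : Matrix (Fin p) (Fin p) ℝ) * Matrix.diagonal f * star (U : Matrix (Fin p) (Fin p) ℝ)

open Matrix in
lemma cgDiag_add {p : ℕ} (U : Matrix.unitaryGroup (Fin p) ℝ) (f g : Fin p → ℝ) :
    cgDiag U (f + g) = cgDiag U f + cgDiag U g := by
  have h : Matrix.diagonal (f + g) = Matrix.diagonal f + Matrix.diagonal g :=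
    (Matrix.diagonal_add f g).symm
  simp only [cgDiag]
  rw [h, Matrix.mul_add, Matrix.add_mul]

open Matrix in
lemma cgDiag_sub {p : ℕ} (U : Matrix.unitaryGroup (Fin p) ℝ) (f g : Fin p → ℝ) :
    cgDiag U (f - g) = cgDiag U f - cgDiag U g := by
  have h : Matrix.diagonal (f - g) = Matrix.diagonal f - Matrix.diagonal g :=
    (Matrix.diagonal_sub f g).symm
  simp only [cgDiag]
  rw [h, Matrix.mul_sub, Matrix.sub_mul]

open Matrix in
lemma cgDiag_smul {p : ℕ} (U : Matrix.unitaryGroup (Fin p) ℝ) (c : ℝ) (f : Fin p → ℝ) :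
    cgDiag U (c • f) = c • cgDiag U f := by
  simp [cgDiag, diagonal_smul, Matrix.mul_smul, Matrix.smul_mul]

open Matrix in
lemma cgDiag_one {p : ℕ} (U : Matrix.unitaryGroup (Fin p) ℝ) :
    cgDiag U 1 = 1 := by
  have : Matrix.diagonal (1 : Fin p → ℝ) = 1 := Matrix.diagonal_one
  simp only [cgDiag, this, mul_one]
  exact Unitary.coe_mul_star_self U

open Matrix in
lemma unitary_mulVec_injective {p : ℕ} (U : Matrix.unitaryGroup (Fin p) ℝ) :
    Function.Injective ((U : Matrix (Fin p) (Fin p) ℝ)).mulVec := by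
  intro x y h
  have := congrArg (fun v => star (U : Matrix (Fin p) (Fin p) ℝ) *ᵥ v) h
  simpa [mulVec_mulVec, Unitary.coe_star_mul_self U] using this

open Matrix in
lemma star_unitary_mulVec_injective {p : ℕ} (U : Matrix.unitaryGroup (Fin p) ℝ) :
    Function.Injective ((star (U : Matrix (Fin p) (Fin p) ℝ))).mulVec := by
  intro x y h
  have := congrArg (fun v => (U : Matrix (Fin p) (Fin p) ℝ) *ᵥ v) h
  simpa [mulVec_mulVec, Unitary.coe_mul_star_self U] using this

open Matrix in
lemma cgDiag_posDef_iff {p : ℕ} (U : Matrix.unitaryGroup (Fin p) ℝ) (f : Fin p → ℝ) :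
    (cgDiag U f).PosDef ↔ ∀ i, 0 < f i := by
  constructor
  · intro h
    have h2 : ((U : Matrix (Fin p) (Fin p) ℝ)ᴴ * cgDiag U f *
        (U : Matrix (Fin p) (Fin p) ℝ)).PosDef :=
      posDef_conj_aux h (unitary_mulVec_injective U)
    have he : ((U : Matrix (Fin p) (Fin p) ℝ)ᴴ * cgDiag U f *
        (U : Matrix (Fin p) (Fin p) ℝ)) = Matrix.diagonal f := by
      simp only [cgDiag, ← star_eq_conjTranspose, ← mul_assoc]
      rw [Unitary.coe_star_mul_self U, one_mul, mul_assoc, Unitary.coe_star_mul_self U, mul_one]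
    rw [he] at h2
    exact Matrix.posDef_diagonal_iff.mp h2
  · intro h
    have hD : (Matrix.diagonal f).PosDef := Matrix.PosDef.diagonal h
    have := posDef_conj_aux hD (star_unitary_mulVec_injective U)
    simpa only [cgDiag, ← star_eq_conjTranspose, star_star] using this

open Matrix in
lemma cgDiag_posSemidef {p : ℕ} (U : Matrix.unitaryGroup (Fin p) ℝ) (f : Fin p → ℝ)
    (h : ∀ i, 0 ≤ f i) : (cgDiag U f).PosSemidef := by
  have hD : (Matrix.diagonal f).PosSemidef := Matrix.posSemidef_diagonal_iff.mpr h
  simpa only [cgDiag, star_eq_conjTranspose] using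
    hD.mul_mul_conjTranspose_same (U : Matrix (Fin p) (Fin p) ℝ)

/-- If `−kⱼC ≺ kᵢI`, then `X* := (kᵢkⱼ/(kᵢ+kⱼ)) (I − C)₊` satisfies
`X* ⪰ O`, `−kⱼC ≺ X*`, and `X* ≺ kᵢI`. -/
theorem stmt3 {p : ℕ} (hp : 1 ≤ p) (ki kj : ℝ) (hki : 0 < ki) (hkj : 0 < kj)
    (C : Matrix (Fin p) (Fin p) ℝ) (hCs : C.IsSymm)
    (hfeas : (ki • (1 : Matrix (Fin p) (Fin p) ℝ) + kj • C).PosDef)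
    (Xstar : Matrix (Fin p) (Fin p) ℝ)
    (hXstar : Xstar = (ki * kj / (ki + kj)) • matPosPart (1 - C)) :
    Xstar.PosSemidef ∧ (Xstar + kj • C).PosDef ∧
      (ki • (1 : Matrix (Fin p) (Fin p) ℝ) - Xstar).PosDef := by
  have hC : C.IsHermitian := hCs
  have hA : (1 - C : Matrix (Fin p) (Fin p) ℝ).IsHermitian := Matrix.isHermitian_one.sub hC
  set U := hA.eigenvectorUnitary with hU
  set d := hA.eigenvalues with hd
  set c := ki * kj / (ki + kj) with hc
  have hksum : 0 < ki + kj := by linarith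
  have hcpos : 0 < c := by positivity
  -- spectral decomposition of 1 - C
  have hspec : (1 - C : Matrix (Fin p) (Fin p) ℝ) = cgDiag U d := by
    have := hA.spectral_theorem
    simpa [cgDiag] using this
  have hCeq : C = cgDiag U (fun i => 1 - d i) := by
    have : cgDiag U (fun i => 1 - d i) = cgDiag U ((1 : Fin p → ℝ) - d) := rfl
    rw [this, cgDiag_sub, cgDiag_one, ← hspec]
    exact (sub_sub_cancel 1 C).symm
  -- the positive part
  have hpos : matPosPart (1 - C) = cgDiag U (fun i => max (d i) 0) := by
    simp only [matPosPart, dif_pos hA, cgDiag]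
    rfl
  have hXeq : Xstar = cgDiag U (fun i => c * max (d i) 0) := by
    rw [hXstar, hpos, ← cgDiag_smul]
    rfl
  -- feasibility in eigenvalue form
  have hfeas' : ∀ i, 0 < ki + kj * (1 - d i) := by
    have : ki • (1 : Matrix (Fin p) (Fin p) ℝ) + kj • C
        = cgDiag U (fun i => ki + kj * (1 - d i)) := by
      rw [show (fun i => ki + kj * (1 - d i))
            = ki • (1 : Fin p → ℝ) + kj • (fun i => 1 - d i) from by
          funext i; simp [mul_comm], cgDiag_add, cgDiag_smul, cgDiag_smul, cgDiag_one, ← hCeq]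
    rw [this] at hfeas
    exact (cgDiag_posDef_iff U _).mp hfeas
  refine ⟨?_, ?_, ?_⟩
  · rw [hXeq]
    exact cgDiag_posSemidef U _ (fun i => by positivity)
  · have heq : Xstar + kj • C = cgDiag U (fun i => c * max (d i) 0 + kj * (1 - d i)) := by
      rw [hXeq, hCeq,
        show (fun i => c * max (d i) 0 + kj * (1 - d i))
            = (fun i => c * max (d i) 0) + kj • (fun i => 1 - d i) from by
          funext i; simp [mul_comm], cgDiag_add, cgDiag_smul]
    rw [heq, cgDiag_posDef_iff]
    intro i
    have hi := hfeas' i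
    rcases le_or_gt (d i) 0 with h0 | h0
    · rw [max_eq_right h0]
      nlinarith
    · rw [max_eq_left h0.le, hc]
      have hkey : (ki * kj / (ki + kj)) * (ki + kj) = ki * kj := by field_simp
      nlinarith [mul_pos hkj hi, mul_pos hcpos h0]
  · have heq : ki • (1 : Matrix (Fin p) (Fin p) ℝ) - Xstar
        = cgDiag U (fun i => ki - c * max (d i) 0) := by
      rw [hXeq,
        show (fun i => ki - c * max (d i) 0)
            = ki • (1 : Fin p → ℝ) - (fun i => c * max (d i) 0) from by
          funext i; simp, cgDiag_sub, cgDiag_smul, cgDiag_one]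
    rw [heq, cgDiag_posDef_iff]
    intro i
    have hi := hfeas' i
    rcases le_or_gt (d i) 0 with h0 | h0
    · rw [max_eq_right h0]; linarith
    · rw [max_eq_left h0.le, hc]
      have hkey : (ki * kj / (ki + kj)) * (ki + kj) = ki * kj := by field_simp
      nlinarith [mul_pos hki hi, mul_pos hcpos h0]
end

section
/- Let p ≥ 1, let k_i, k_j > 0 be real numbers, and let C be a symmetric real p×p matrix with −k_j·C ≺ k_i·I. Define X* := (k_i k_j/(k_i+k_j)) · (I − C)₊. Then I − X*/k_i ≻ O and C + X*/k_j ≻ O, the matrix G := −(I − X*/k_i)^{−1} + (C + X*/k_j)^{−1} satisfies G ⪯ O, and trace(G · X*) = 0. -/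
section Stmt4Aux

open Matrix

variable {p : ℕ} {U : Matrix (Fin p) (Fin p) ℝ}

lemma aux_conj_add (f g : Fin p → ℝ) :
    U * Matrix.diagonal f * star U + U * Matrix.diagonal g * star U
      = U * Matrix.diagonal (fun i => f i + g i) * star U := by
  have : Matrix.diagonal (fun i => f i + g i) = Matrix.diagonal f + Matrix.diagonal g := by
    rw [← Matrix.diagonal_add]
  rw [this, Matrix.mul_add, Matrix.add_mul]

lemma aux_conj_sub (f g : Fin p → ℝ) :
    U * Matrix.diagonal f * star U - U * Matrix.diagonal g * star U
      = U * Matrix.diagonal (fun i => f i - g i) * star U := by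
  have : Matrix.diagonal (fun i => f i - g i) = Matrix.diagonal f - Matrix.diagonal g := by
    rw [← Matrix.diagonal_sub]
  rw [this, Matrix.mul_sub, Matrix.sub_mul]

lemma aux_conj_smul (r : ℝ) (f : Fin p → ℝ) :
    r • (U * Matrix.diagonal f * star U)
      = U * Matrix.diagonal (fun i => r * f i) * star U := by
  have : Matrix.diagonal (fun i => r * f i) = r • Matrix.diagonal f := by
    rw [← Matrix.diagonal_smul]; rfl
  rw [this, Matrix.mul_smul, Matrix.smul_mul]

lemma aux_conj_neg (f : Fin p → ℝ) :
    -(U * Matrix.diagonal f * star U)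
      = U * Matrix.diagonal (fun i => -(f i)) * star U := by
  have : Matrix.diagonal (fun i => -(f i)) = -Matrix.diagonal f := by
    rw [← Matrix.diagonal_neg]
  rw [this, Matrix.mul_neg, Matrix.neg_mul]

lemma aux_conj_mul (hU1 : star U * U = 1) (f g : Fin p → ℝ) :
    (U * Matrix.diagonal f * star U) * (U * Matrix.diagonal g * star U)
      = U * Matrix.diagonal (fun i => f i * g i) * star U := by
  have : (U * Matrix.diagonal f * star U) * (U * Matrix.diagonal g * star U)
      = U * (Matrix.diagonal f * (star U * U) * Matrix.diagonal g) * star U := by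
    noncomm_ring
  rw [this, hU1, mul_one, Matrix.diagonal_mul_diagonal]

lemma aux_conj_one (hU2 : U * star U = 1) :
    (1 : Matrix (Fin p) (Fin p) ℝ) = U * Matrix.diagonal (fun _ => (1 : ℝ)) * star U := by
  rw [Matrix.diagonal_one, mul_one, hU2]

lemma aux_conj_inv (hU1 : star U * U = 1) (hU2 : U * star U = 1)
    {f : Fin p → ℝ} (hf : ∀ i, f i ≠ 0) :
    (U * Matrix.diagonal f * star U)⁻¹
      = U * Matrix.diagonal (fun i => (f i)⁻¹) * star U := by
  apply Matrix.inv_eq_right_inv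
  rw [aux_conj_mul hU1]
  have : (fun i => f i * (f i)⁻¹) = fun _ => (1 : ℝ) := by
    funext i; exact mul_inv_cancel₀ (hf i)
  rw [this, Matrix.diagonal_one, mul_one, hU2]

lemma aux_conj_posDef {M : Matrix (Fin p) (Fin p) ℝ}
    (hU2 : U * star U = 1) (hM : M.PosDef) : (U * M * star U).PosDef := by
  refine Matrix.posDef_iff_dotProduct_mulVec.mpr ⟨?_, ?_⟩
  · have h := hM.1.eq
    rw [Matrix.IsHermitian, Matrix.star_eq_conjTranspose,
      Matrix.conjTranspose_mul, Matrix.conjTranspose_mul,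
      Matrix.conjTranspose_conjTranspose, h, mul_assoc]
  · intro x hx
    have hy : star U *ᵥ x ≠ 0 := by
      intro h
      apply hx
      have hxe : U *ᵥ (star U *ᵥ x) = x := by
        rw [Matrix.mulVec_mulVec, hU2, Matrix.one_mulVec]
      rw [h, Matrix.mulVec_zero] at hxe
      exact hxe.symm
    have key : star x ⬝ᵥ ((U * M * star U) *ᵥ x)
        = star (star U *ᵥ x) ⬝ᵥ (M *ᵥ (star U *ᵥ x)) := by
      simp only [Matrix.star_mulVec, Matrix.star_eq_conjTranspose,
        Matrix.conjTranspose_conjTranspose, Matrix.dotProduct_mulVec,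
        Matrix.mulVec_mulVec, Matrix.vecMul_vecMul, mul_assoc]
    rw [key]
    exact hM.dotProduct_mulVec_pos hy

end Stmt4Aux

/-- With `X* := (kᵢkⱼ/(kᵢ+kⱼ)) (I − C)₊`, we have `I − X*/kᵢ ≻ O`,
`C + X*/kⱼ ≻ O`, the gradient `G := −(I − X*/kᵢ)⁻¹ + (C + X*/kⱼ)⁻¹` satisfies `G ⪯ O`,
and `trace(G X*) = 0`. -/
theorem stmt4 {p : ℕ} (hp : 1 ≤ p) (ki kj : ℝ) (hki : 0 < ki) (hkj : 0 < kj)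
    (C : Matrix (Fin p) (Fin p) ℝ) (hCs : C.IsSymm)
    (hfeas : (ki • (1 : Matrix (Fin p) (Fin p) ℝ) + kj • C).PosDef)
    (Xstar : Matrix (Fin p) (Fin p) ℝ)
    (hXstar : Xstar = (ki * kj / (ki + kj)) • matPosPart (1 - C))
    (G : Matrix (Fin p) (Fin p) ℝ)
    (hG : G = -(1 - ki⁻¹ • Xstar)⁻¹ + (C + kj⁻¹ • Xstar)⁻¹) :
    (1 - ki⁻¹ • Xstar).PosDef ∧ (C + kj⁻¹ • Xstar).PosDef ∧
      (-G).PosSemidef ∧ (G * Xstar).trace = 0 := by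
  have hij : 0 < ki + kj := by linarith
  have hA : (1 - C : Matrix (Fin p) (Fin p) ℝ).IsHermitian := by
    rw [Matrix.IsHermitian, Matrix.conjTranspose_eq_transpose_of_trivial,
      Matrix.transpose_sub, Matrix.transpose_one, hCs]
  set U : Matrix (Fin p) (Fin p) ℝ := (hA.eigenvectorUnitary : Matrix (Fin p) (Fin p) ℝ)
    with hUdef
  set d : Fin p → ℝ := hA.eigenvalues with hddef
  have hU1 : star U * U = 1 := Matrix.mem_unitaryGroup_iff'.mp hA.eigenvectorUnitary.2
  have hU2 : U * star U = 1 := Matrix.mem_unitaryGroup_iff.mp hA.eigenvectorUnitary.2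
  have hspec : (1 : Matrix (Fin p) (Fin p) ℝ) - C = U * Matrix.diagonal d * star U := by
    have h := hA.spectral_theorem
    rw [RCLike.ofReal_real_eq_id] at h
    simpa using h
  have hC : C = U * Matrix.diagonal (fun i => 1 - d i) * star U := by
    have h : C = (1 : Matrix (Fin p) (Fin p) ℝ) - (1 - C) := (sub_sub_cancel 1 C).symm
    rw [h, hspec, aux_conj_one hU2, aux_conj_sub]
  -- the diagonal entries of Xstar in the eigenbasis
  set c : ℝ := ki * kj / (ki + kj) with hc
  set x : Fin p → ℝ := fun i => c * max (d i) 0 with hxdef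
  have hX : Xstar = U * Matrix.diagonal x * star U := by
    rw [hXstar, matPosPart, dif_pos hA, ← hUdef, aux_conj_smul]
  -- feasibility in scalar form
  have hd : ∀ i, 0 < ki + kj * (1 - d i) := by
    have hfe : ki • (1 : Matrix (Fin p) (Fin p) ℝ) + kj • C
        = U * Matrix.diagonal (fun i => ki + kj * (1 - d i)) * star U := by
      rw [hC, aux_conj_one hU2 (U := U), aux_conj_smul, aux_conj_smul, aux_conj_add]
      simp
    rw [hfe] at hfeas
    have hd' := aux_conj_posDef (U := star U) (by simpa using hU1) hfeas
    have he : star U * (U * Matrix.diagonal (fun i => ki + kj * (1 - d i)) * star U)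
        * star (star U) = Matrix.diagonal (fun i => ki + kj * (1 - d i)) := by
      rw [star_star, ← mul_assoc, ← mul_assoc, hU1, one_mul, mul_assoc, hU1, mul_one]
    rw [he] at hd'
    exact Matrix.posDef_diagonal_iff.mp hd'
  -- scalar diagonal entries of the two matrices
  set a : Fin p → ℝ := fun i => 1 - ki⁻¹ * x i with hadef
  set b : Fin p → ℝ := fun i => (1 - d i) + kj⁻¹ * x i with hbdef
  have h1 : 1 - ki⁻¹ • Xstar = U * Matrix.diagonal a * star U := by
    rw [hX, aux_conj_smul, aux_conj_one hU2 (U := U), aux_conj_sub]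
  have h2 : C + kj⁻¹ • Xstar = U * Matrix.diagonal b * star U := by
    rw [hC, hX, aux_conj_smul, aux_conj_add]
  -- scalar positivity facts
  have hval : ∀ i, 0 < d i →
      a i = (ki + kj * (1 - d i)) / (ki + kj) ∧ b i = (ki + kj * (1 - d i)) / (ki + kj) := by
    intro i hi
    have hmax : max (d i) 0 = d i := max_eq_left hi.le
    constructor
    · rw [hadef]; simp only [hxdef, hc, hmax]
      field_simp
      ring
    · rw [hbdef]; simp only [hxdef, hc, hmax]
      field_simp
      ring
  have ha : ∀ i, 0 < a i := by
    intro i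
    rcases le_or_gt (d i) 0 with h | h
    · have hmax : max (d i) 0 = 0 := max_eq_right h
      rw [hadef]; simp [hxdef, hmax]
    · rw [(hval i h).1]
      exact div_pos (hd i) hij
  have hb : ∀ i, 0 < b i := by
    intro i
    rcases le_or_gt (d i) 0 with h | h
    · have hmax : max (d i) 0 = 0 := max_eq_right h
      rw [hbdef]; simp only [hxdef, hmax, mul_zero, add_zero]
      linarith
    · rw [(hval i h).2]
      exact div_pos (hd i) hij
  have hg : ∀ i, (b i)⁻¹ ≤ (a i)⁻¹ := by
    intro i
    rcases le_or_gt (d i) 0 with h | h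
    · have hmax : max (d i) 0 = 0 := max_eq_right h
      have haa : a i = 1 := by rw [hadef]; simp [hxdef, hmax]
      have hbb : b i = 1 - d i := by
        rw [hbdef]; simp [hxdef, hmax]
      rw [haa, hbb, inv_one]
      have h1d : (1 : ℝ) ≤ 1 - d i := by linarith
      exact inv_le_one_of_one_le₀ h1d
    · rw [(hval i h).1, (hval i h).2]
  have hgx : ∀ i, (-(a i)⁻¹ + (b i)⁻¹) * x i = 0 := by
    intro i
    rcases le_or_gt (d i) 0 with h | h
    · have hmax : max (d i) 0 = 0 := max_eq_right h
      have : x i = 0 := by simp [hxdef, hmax]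
      rw [this, mul_zero]
    · rw [(hval i h).1, (hval i h).2]
      ring
  -- diagonal form of G
  have hGd : G = U * Matrix.diagonal (fun i => -(a i)⁻¹ + (b i)⁻¹) * star U := by
    rw [hG, h1, h2, aux_conj_inv hU1 hU2 (fun i => (ha i).ne'),
      aux_conj_inv hU1 hU2 (fun i => (hb i).ne'), aux_conj_neg, aux_conj_add]
  refine ⟨?_, ?_, ?_, ?_⟩
  · rw [h1]; exact aux_conj_posDef hU2 (Matrix.PosDef.diagonal ha)
  · rw [h2]; exact aux_conj_posDef hU2 (Matrix.PosDef.diagonal hb)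
  · have hnG : -G = U * Matrix.diagonal (fun i => (a i)⁻¹ - (b i)⁻¹) * star U := by
      rw [hGd, aux_conj_neg]
      have hfun : (fun i => -(-(a i)⁻¹ + (b i)⁻¹)) = fun i => (a i)⁻¹ - (b i)⁻¹ := by
        funext i; ring
      rw [hfun]
    rw [hnG]
    have hps : (Matrix.diagonal (fun i => (a i)⁻¹ - (b i)⁻¹)).PosSemidef :=
      Matrix.posSemidef_diagonal_iff.mpr (fun i => sub_nonneg.mpr (hg i))
    have := hps.mul_mul_conjTranspose_same U
    rwa [← Matrix.star_eq_conjTranspose] at this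
  · have hGX : G * Xstar = 0 := by
      rw [hGd, hX, aux_conj_mul hU1]
      have : (fun i => (-(a i)⁻¹ + (b i)⁻¹) * x i) = fun _ => (0 : ℝ) := funext hgx
      rw [this, Matrix.diagonal_zero, Matrix.mul_zero, Matrix.zero_mul]
    rw [hGX, Matrix.trace_zero]
end
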